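/- arXiv:1707.04014 — 2 statements merged into one kernel-verified Lean document; each statement's English description precedes it below -/
import Mathlib

section
/- Let Ω ⊂ ℝ² be a compact connected region with smooth boundary ∂Ω, and let (p,q) : [0,T) → ∂Ω × ∂Ω be a chord shortening flow relative to ∂Ω. Then d/dt Θ̄ = (1/ℓ)(‖Θ‖² − 1 − ⟨ξ(p), ξ(q)⟩)·Θ̄ + k(p)·⟨−η(p), ν(p)⟩·Θ(p) + k(q)·⟨−η(q), ν(q)⟩·Θ(q), where ℓ = ℓ(t) = |p(t) − q(t)|. -/
open scoped RealInnerProductSpace ENNReal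
open Set Filter

noncomputable section

/-- Euclidean `n`-space. -/
abbrev Euc (n : ℕ) := EuclideanSpace ℝ (Fin n)

/-- The orthogonal projection `π_K` onto a submodule `K`, as a map `Euc n → Euc n`. -/
def projSM {n : ℕ} (K : Submodule ℝ (Euc n)) (v : Euc n) : Euc n :=
  (K.orthogonalProjectionOnto v : Euc n)

/-- `S` is a smooth embedded `k`-dimensional submanifold (without boundary) of `ℝⁿ`,
whose tangent space at each `x ∈ S` is the `k`-dimensional subspace `T x ⊆ ℝⁿ`:
every point of `S` has a neighbourhood in `S` which is the image of a smooth injective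
parametrization, which is a homeomorphism onto its image, with injective differential whose
range is the assigned tangent space. -/
def IsSubmanifold (n k : ℕ) (S : Set (Euc n)) (T : Euc n → Submodule ℝ (Euc n)) : Prop :=
  ∀ x ∈ S, ∃ (f : Euc k → Euc n) (u : Set (Euc k)) (v : Set (Euc n)),
    IsOpen u ∧ IsOpen v ∧ x ∈ v ∧ ContDiffOn ℝ (⊤ : ℕ∞) f u ∧ Set.InjOn f u ∧
    f '' u = S ∩ v ∧
    (∀ s ⊆ u, IsOpen s → ∃ w : Set (Euc n), IsOpen w ∧ f '' s = S ∩ w) ∧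
    ∀ y ∈ u, Function.Injective (fderiv ℝ f y) ∧
      LinearMap.range ((fderiv ℝ f y) : Euc k →ₗ[ℝ] Euc n) = T (f y)

/-- The tangential part `η^T(x) = π_{T x}((x - y)/|x - y|)` of the outward unit conormal at `x`
of the chord from `x` to `y`. -/
def conormalT {n : ℕ} (T : Euc n → Submodule ℝ (Euc n)) (x y : Euc n) : Euc n :=
  projSM (T x) (‖x - y‖⁻¹ • (x - y))

/-- A chord shortening flow relative to `S` (with tangent spaces `T`) on the time domain `dom`:
a pair of C¹ curves `p q : dom → S` with `p t ≠ q t`, satisfying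
`p' = -π_{p}((p-q)/|p-q|)` and `q' = -π_{q}((q-p)/|q-p|)`. -/
def IsCSFOn {n : ℕ} (S : Set (Euc n)) (T : Euc n → Submodule ℝ (Euc n))
    (dom : Set ℝ) (p q : ℝ → Euc n) : Prop :=
  ∀ t ∈ dom, p t ∈ S ∧ q t ∈ S ∧ p t ≠ q t ∧
    HasDerivWithinAt p (-(conormalT T (p t) (q t))) dom t ∧
    HasDerivWithinAt q (-(conormalT T (q t) (p t))) dom t

/-- The time interval `[0, Tm)` (where possibly `Tm = ∞`). -/
def csfDomain (Tm : ℝ≥0∞) : Set ℝ := {t : ℝ | 0 ≤ t ∧ ENNReal.ofReal t < Tm}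

/-- A maximal chord shortening flow: one defined on `[0, Tm)` which cannot be extended to a
chord shortening flow on a strictly larger interval `[0, Tm')`. -/
def IsMaximalCSF {n : ℕ} (S : Set (Euc n)) (T : Euc n → Submodule ℝ (Euc n))
    (Tm : ℝ≥0∞) (p q : ℝ → Euc n) : Prop :=
  IsCSFOn S T (csfDomain Tm) p q ∧
  ∀ Tm' : ℝ≥0∞, Tm < Tm' → ∀ p' q' : ℝ → Euc n,
    IsCSFOn S T (csfDomain Tm') p' q' →
    ¬ (∀ t ∈ csfDomain Tm, p' t = p t ∧ q' t = q t)

/-- Counterclockwise rotation by `π/2` in the plane. -/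
def Jrot (v : Euc 2) : Euc 2 := WithLp.toLp 2 ![-(v 1), v 0]

/-- The boundary angle `Θ(p) = ⟨η(p), ξ(p)⟩` at the first endpoint of the oriented chord
from `p` to `q`, where `η(p) = (p-q)/|p-q|` and `ξ` is the orientation field. -/
def thetaP (ξ : Euc 2 → Euc 2) (p q : Euc 2) : ℝ := ⟪‖p - q‖⁻¹ • (p - q), ξ p⟫

/-- The boundary angle `Θ(q) = -⟨η(q), ξ(q)⟩` at the second endpoint of the oriented chord
from `p` to `q`, where `η(q) = (q-p)/|q-p|` and `ξ` is the orientation field. -/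
def thetaQ (ξ : Euc 2 → Euc 2) (p q : Euc 2) : ℝ := -⟪‖q - p‖⁻¹ • (q - p), ξ q⟫

lemma euc2_decomp {e : Euc 2} (he : ‖e‖ = 1) (w : Euc 2) :
    w = ⟪w, e⟫ • e + ⟪w, Jrot e⟫ • Jrot e := by
  have h1 : e 0 * e 0 + e 1 * e 1 = 1 := by
    have h := real_inner_self_eq_norm_sq e
    rw [he, one_pow] at h
    rw [← h]; simp only [PiLp.inner_apply, Fin.sum_univ_two, RCLike.inner_apply, conj_trivial]
  ext i
  fin_cases i
  · simp [Jrot, PiLp.inner_apply, Fin.sum_univ_two]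
    linear_combination (-(w 0)) * h1
  · simp [Jrot, PiLp.inner_apply, Fin.sum_univ_two]
    linear_combination (-(w 1)) * h1

lemma thetaQ_eq (ξ : Euc 2 → Euc 2) (a b : Euc 2) :
    thetaQ ξ a b = ⟪‖a - b‖⁻¹ • (a - b), ξ b⟫ := by
  rw [thetaQ, show b - a = -(a - b) from (neg_sub a b).symm]
  rw [norm_neg, smul_neg, inner_neg_left, neg_neg]

set_option maxHeartbeats 1000000 in
/-- **Evolution of `Θ̄ = Θ(p) + Θ(q)`** under the chord shortening flow relative to the smooth
boundary of a compact connected planar region: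
`dΘ̄/dt = (1/ℓ)(‖Θ‖² - 1 - ⟨ξ(p),ξ(q)⟩)Θ̄ + k(p)⟨-η(p),ν(p)⟩Θ(p) + k(q)⟨-η(q),ν(q)⟩Θ(q)`. -/
theorem chord_statement_13
    (Ω : Set (Euc 2)) (hcpt : IsCompact Ω) (hconn : IsConnected Ω)
    (hreg : Ω = closure (interior Ω))
    (T : Euc 2 → Submodule ℝ (Euc 2)) (hsub : IsSubmanifold 2 1 (frontier Ω) T)
    (ξ : Euc 2 → Euc 2)
    (hξ : ∀ x ∈ frontier Ω, ξ x ∈ T x ∧ ‖ξ x‖ = 1 ∧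
      ∃ ε : ℝ, 0 < ε ∧ ∀ s : ℝ, 0 < s → s < ε → x + s • Jrot (ξ x) ∈ interior Ω)
    (κ : Euc 2 → ℝ)
    (hκ : ∀ x ∈ frontier Ω, ∃ dξ : Euc 2 →L[ℝ] Euc 2,
      HasFDerivWithinAt ξ dξ (frontier Ω) x ∧ κ x = ⟪dξ (ξ x), Jrot (ξ x)⟫)
    (Tm : ℝ≥0∞) (p q : ℝ → Euc 2)
    (hflow : IsCSFOn (frontier Ω) T (csfDomain Tm) p q) :
    ∀ t ∈ csfDomain Tm,
      HasDerivWithinAt (fun s => thetaP ξ (p s) (q s) + thetaQ ξ (p s) (q s))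
        (‖p t - q t‖⁻¹ *
            ((thetaP ξ (p t) (q t) ^ 2 + thetaQ ξ (p t) (q t) ^ 2)
              - 1 - ⟪ξ (p t), ξ (q t)⟫) *
            (thetaP ξ (p t) (q t) + thetaQ ξ (p t) (q t))
          + κ (p t) * ⟪-(‖p t - q t‖⁻¹ • (p t - q t)), Jrot (ξ (p t))⟫ * thetaP ξ (p t) (q t)
          + κ (q t) * ⟪-(‖q t - p t‖⁻¹ • (q t - p t)), Jrot (ξ (q t))⟫ * thetaQ ξ (p t) (q t))
        (csfDomain Tm) t := by
  -- tangent spaces are spanned by ξ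
  have tangent_span : ∀ x ∈ frontier Ω, T x = (ℝ ∙ ξ x) := by
    intro x hx
    obtain ⟨f, u, v, hu, hv, hxv, hcd, hinj, hfu, hloc, hder⟩ := hsub x hx
    have hxmem : x ∈ f '' u := hfu ▸ ⟨hx, hxv⟩
    obtain ⟨y, hyu, hyx⟩ := hxmem
    obtain ⟨hinjd, hrange⟩ := hder y hyu
    have hfin : Module.finrank ℝ (T x) = 1 := by
      rw [← hyx, ← hrange]
      rw [LinearMap.finrank_range_of_inj hinjd]
      exact finrank_euclideanSpace_fin
    have hne0 : ξ x ≠ 0 := by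
      intro h
      have := (hξ x hx).2.1
      rw [h, norm_zero] at this
      exact one_ne_zero this.symm
    have hle : (ℝ ∙ ξ x) ≤ T x := Submodule.span_le.2 (by simp [(hξ x hx).1])
    exact (Submodule.eq_of_le_of_finrank_eq hle
      (by rw [hfin, finrank_span_singleton hne0])).symm
  have proj_eq : ∀ x ∈ frontier Ω, ∀ w : Euc 2, projSM (T x) w = ⟪ξ x, w⟫ • ξ x := by
    intro x hx w
    rw [projSM, tangent_span x hx, ← Submodule.starProjection_apply, Submodule.starProjection_unit_singleton ℝ (hξ x hx).2.1]
  intro t ht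
  obtain ⟨hPmem, hQmem, hne, hp, hq⟩ := hflow t ht
  have hmapsP : MapsTo p (csfDomain Tm) (frontier Ω) := fun s hs => (hflow s hs).1
  have hmapsQ : MapsTo q (csfDomain Tm) (frontier Ω) := fun s hs => (hflow s hs).2.1
  have hl0 : ‖p t - q t‖ ≠ 0 := by
    simp [sub_eq_zero, hne]
  have heP : ‖ξ (p t)‖ = 1 := (hξ (p t) hPmem).2.1
  have heQ : ‖ξ (q t)‖ = 1 := (hξ (q t) hQmem).2.1
  -- velocities
  have hp' : HasDerivWithinAt p ((-thetaP ξ (p t) (q t)) • ξ (p t)) (csfDomain Tm) t := by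
    have : -(conormalT T (p t) (q t)) = (-thetaP ξ (p t) (q t)) • ξ (p t) := by
      rw [conormalT, proj_eq _ hPmem, thetaP, real_inner_comm, neg_smul]
    exact this ▸ hp
  have hq' : HasDerivWithinAt q ((thetaQ ξ (p t) (q t)) • ξ (q t)) (csfDomain Tm) t := by
    have : -(conormalT T (q t) (p t)) = (thetaQ ξ (p t) (q t)) • ξ (q t) := by
      rw [conormalT, proj_eq _ hQmem, thetaQ, real_inner_comm, neg_smul]
    exact this ▸ hq
  -- derivative of ξ along the curves
  obtain ⟨Dp, hDp, hkp⟩ := hκ (p t) hPmem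
  obtain ⟨Dq, hDq, hkq⟩ := hκ (q t) hQmem
  have hξp : HasDerivWithinAt (fun s => ξ (p s))
      ((-thetaP ξ (p t) (q t)) • Dp (ξ (p t))) (csfDomain Tm) t := by
    have h := hDp.comp_hasDerivWithinAt t hp' hmapsP
    rw [map_smul] at h; exact h
  have hξq : HasDerivWithinAt (fun s => ξ (q s))
      ((thetaQ ξ (p t) (q t)) • Dq (ξ (q t))) (csfDomain Tm) t := by
    have h := hDq.comp_hasDerivWithinAt t hq' hmapsQ
    rw [map_smul] at h; exact h
  -- unique differentiability
  have hud : UniqueDiffWithinAt ℝ (csfDomain Tm) t := by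
    obtain ⟨ht0, htm⟩ := ht
    obtain ⟨m, hm1, hm2⟩ := exists_between htm
    have hmt : m ≠ ⊤ := hm2.ne_top
    have htr : t < m.toReal := (ENNReal.ofReal_lt_iff_lt_toReal ht0 hmt).1 hm1
    have hsub2 : Ico t m.toReal ⊆ csfDomain Tm := by
      intro s hs
      have hs0 : (0:ℝ) ≤ s := ht0.trans hs.1
      refine ⟨hs0, lt_trans ?_ hm2⟩
      exact (ENNReal.ofReal_lt_iff_lt_toReal hs0 hmt).2 hs.2
    exact ((uniqueDiffOn_Ico t m.toReal) t ⟨le_refl t, htr⟩).mono hsub2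
  -- orthogonality facts
  have horthP : thetaP ξ (p t) (q t) * ⟪Dp (ξ (p t)), ξ (p t)⟫ = 0 := by
    have h1 : HasDerivWithinAt (fun s => (⟪ξ (p s), ξ (p s)⟫ : ℝ))
        (⟪ξ (p t), (-thetaP ξ (p t) (q t)) • Dp (ξ (p t))⟫
          + ⟪(-thetaP ξ (p t) (q t)) • Dp (ξ (p t)), ξ (p t)⟫) (csfDomain Tm) t :=
      hξp.inner ℝ hξp
    have h2 : HasDerivWithinAt (fun s => (⟪ξ (p s), ξ (p s)⟫ : ℝ)) 0 (csfDomain Tm) t := by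
      have hc := hasDerivWithinAt_const t (csfDomain Tm) (1:ℝ)
      refine hc.congr (fun s hs => ?_) ?_
      · rw [real_inner_self_eq_norm_sq, (hξ (p s) (hmapsP hs)).2.1]; norm_num
      · rw [real_inner_self_eq_norm_sq, heP]; norm_num
    have := (h1.derivWithin hud).symm.trans (h2.derivWithin hud)
    rw [real_inner_smul_left, real_inner_smul_right, real_inner_comm] at this
    linarith [this]
  have horthQ : thetaQ ξ (p t) (q t) * ⟪Dq (ξ (q t)), ξ (q t)⟫ = 0 := by
    have h1 : HasDerivWithinAt (fun s => (⟪ξ (q s), ξ (q s)⟫ : ℝ))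
        (⟪ξ (q t), (thetaQ ξ (p t) (q t)) • Dq (ξ (q t))⟫
          + ⟪(thetaQ ξ (p t) (q t)) • Dq (ξ (q t)), ξ (q t)⟫) (csfDomain Tm) t :=
      hξq.inner ℝ hξq
    have h2 : HasDerivWithinAt (fun s => (⟪ξ (q s), ξ (q s)⟫ : ℝ)) 0 (csfDomain Tm) t := by
      have hc := hasDerivWithinAt_const t (csfDomain Tm) (1:ℝ)
      refine hc.congr (fun s hs => ?_) ?_
      · rw [real_inner_self_eq_norm_sq, (hξ (q s) (hmapsQ hs)).2.1]; norm_num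
      · rw [real_inner_self_eq_norm_sq, heQ]; norm_num
    have := (h1.derivWithin hud).symm.trans (h2.derivWithin hud)
    rw [real_inner_smul_left, real_inner_smul_right, real_inner_comm] at this
    linarith [this]
  -- chord vector
  have hu : HasDerivWithinAt (fun s => p s - q s)
      ((-thetaP ξ (p t) (q t)) • ξ (p t) - (thetaQ ξ (p t) (q t)) • ξ (q t)) (csfDomain Tm) t :=
    hp'.sub hq'
  have hinner0 : (⟪p t - q t, p t - q t⟫ : ℝ) ≠ 0 :=
    inner_self_ne_zero.2 (sub_ne_zero.2 hne)
  have hin : HasDerivWithinAt (fun s => (⟪p s - q s, p s - q s⟫ : ℝ))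
      (⟪p t - q t, (-thetaP ξ (p t) (q t)) • ξ (p t) - (thetaQ ξ (p t) (q t)) • ξ (q t)⟫
        + ⟪(-thetaP ξ (p t) (q t)) • ξ (p t) - (thetaQ ξ (p t) (q t)) • ξ (q t), p t - q t⟫)
      (csfDomain Tm) t := hu.inner ℝ hu
  have hN : HasDerivWithinAt (fun s => ‖p s - q s‖)
      ((⟪p t - q t, (-thetaP ξ (p t) (q t)) • ξ (p t) - (thetaQ ξ (p t) (q t)) • ξ (q t)⟫
        + ⟪(-thetaP ξ (p t) (q t)) • ξ (p t) - (thetaQ ξ (p t) (q t)) • ξ (q t), p t - q t⟫)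
        / (2 * ‖p t - q t‖)) (csfDomain Tm) t := by
    have h := hin.sqrt hinner0
    have hfun : (fun s => Real.sqrt (⟪p s - q s, p s - q s⟫ : ℝ)) = fun s => ‖p s - q s‖ := by
      funext s
      rw [real_inner_self_eq_norm_sq, Real.sqrt_sq (norm_nonneg _)]
    have hval : Real.sqrt (⟪p t - q t, p t - q t⟫ : ℝ) = ‖p t - q t‖ := by
      rw [real_inner_self_eq_norm_sq, Real.sqrt_sq (norm_nonneg _)]
    rw [hfun, hval] at h
    exact h
  have hNinv : HasDerivWithinAt (fun s => ‖p s - q s‖⁻¹)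
      (-((⟪p t - q t, (-thetaP ξ (p t) (q t)) • ξ (p t) - (thetaQ ξ (p t) (q t)) • ξ (q t)⟫
        + ⟪(-thetaP ξ (p t) (q t)) • ξ (p t) - (thetaQ ξ (p t) (q t)) • ξ (q t), p t - q t⟫)
        / (2 * ‖p t - q t‖)) / ‖p t - q t‖ ^ 2) (csfDomain Tm) t := hN.inv hl0
  have hη : HasDerivWithinAt (fun s => ‖p s - q s‖⁻¹ • (p s - q s))
      (‖p t - q t‖⁻¹ • ((-thetaP ξ (p t) (q t)) • ξ (p t) - (thetaQ ξ (p t) (q t)) • ξ (q t))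
        + (-((⟪p t - q t, (-thetaP ξ (p t) (q t)) • ξ (p t)
                - (thetaQ ξ (p t) (q t)) • ξ (q t)⟫
            + ⟪(-thetaP ξ (p t) (q t)) • ξ (p t) - (thetaQ ξ (p t) (q t)) • ξ (q t), p t - q t⟫)
            / (2 * ‖p t - q t‖)) / ‖p t - q t‖ ^ 2) • (p t - q t)) (csfDomain Tm) t :=
    hNinv.smul hu
  have h1 := hη.inner ℝ hξp
  have h2 := hη.inner ℝ hξq
  have hsum := h1.add h2
  have hFfun : ∀ s : ℝ, thetaP ξ (p s) (q s) + thetaQ ξ (p s) (q s)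
      = (⟪‖p s - q s‖⁻¹ • (p s - q s), ξ (p s)⟫ : ℝ)
          + ⟪‖p s - q s‖⁻¹ • (p s - q s), ξ (q s)⟫ := by
    intro s
    rw [thetaP, thetaQ_eq]
  refine HasDerivWithinAt.congr ?_ (fun s _ => hFfun s) (hFfun t)
  -- now identify the derivative value
  convert hsum using 1
  · rfl
  -- scalar identity
  have hswap : ‖q t - p t‖⁻¹ • (q t - p t) = -(‖p t - q t‖⁻¹ • (p t - q t)) := by
    rw [norm_sub_rev, show q t - p t = -(p t - q t) from (neg_sub _ _).symm, smul_neg]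
  have hdecP : Dp (ξ (p t)) = ⟪Dp (ξ (p t)), ξ (p t)⟫ • ξ (p t) + κ (p t) • Jrot (ξ (p t)) := by
    conv_lhs => rw [euc2_decomp heP (Dp (ξ (p t)))]
    rw [hkp]
  have hdecQ : Dq (ξ (q t)) = ⟪Dq (ξ (q t)), ξ (q t)⟫ • ξ (q t) + κ (q t) • Jrot (ξ (q t)) := by
    conv_lhs => rw [euc2_decomp heQ (Dq (ξ (q t)))]
    rw [hkq]
  have hee : (⟪ξ (p t), ξ (p t)⟫ : ℝ) = 1 := by
    rw [real_inner_self_eq_norm_sq, heP]; norm_num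
  have hff : (⟪ξ (q t), ξ (q t)⟫ : ℝ) = 1 := by
    rw [real_inner_self_eq_norm_sq, heQ]; norm_num
  have huu : (⟪p t - q t, p t - q t⟫ : ℝ) = ‖p t - q t‖ ^ 2 :=
    real_inner_self_eq_norm_sq _
  have hX : (⟪p t - q t, ξ (p t)⟫ : ℝ) * ⟪Dp (ξ (p t)), ξ (p t)⟫ = 0 := by
    rw [thetaP, real_inner_smul_left] at horthP
    rcases mul_eq_zero.1 horthP with h | h
    · rcases mul_eq_zero.1 h with h' | h'
      · exact absurd h' (inv_ne_zero hl0)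
      · rw [h', zero_mul]
    · rw [h, mul_zero]
  have hY : (⟪p t - q t, ξ (q t)⟫ : ℝ) * ⟪Dq (ξ (q t)), ξ (q t)⟫ = 0 := by
    rw [thetaQ_eq, real_inner_smul_left] at horthQ
    rcases mul_eq_zero.1 horthQ with h | h
    · rcases mul_eq_zero.1 h with h' | h'
      · exact absurd h' (inv_ne_zero hl0)
      · rw [h', zero_mul]
    · rw [h, mul_zero]
  rw [hswap, hdecP, hdecQ, thetaP, thetaQ_eq]
  set U : Euc 2 := p t - q t with hU
  have huu' : (⟪U, U⟫ : ℝ) = ‖U‖ ^ 2 := real_inner_self_eq_norm_sq _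
  simp only [inner_add_left, inner_add_right, inner_sub_left, inner_sub_right,
    inner_neg_left, inner_neg_right, real_inner_smul_left, real_inner_smul_right]
  rw [real_inner_comm (ξ (p t)) U, real_inner_comm (ξ (q t)) U,
    real_inner_comm (ξ (q t)) (ξ (p t)), real_inner_comm (Jrot (ξ (p t))) U,
    real_inner_comm (Jrot (ξ (q t))) U, real_inner_comm (ξ (p t)) (Dp (ξ (p t))),
    real_inner_comm (ξ (q t)) (Dq (ξ (q t)))]
  rw [hee, hff]
  rw [real_inner_comm (ξ (p t)) U, real_inner_comm (ξ (p t)) (Dp (ξ (p t)))] at hX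
  rw [real_inner_comm (ξ (q t)) U, real_inner_comm (ξ (q t)) (Dq (ξ (q t)))] at hY
  linear_combination (‖U‖⁻¹ * ‖U‖⁻¹ * ⟪ξ (p t), U⟫) * hX
    - (‖U‖⁻¹ * ‖U‖⁻¹ * ⟪ξ (q t), U⟫) * hY


end
end

section
/- Let Ω ⊂ ℝ² be a compact connected region with smooth boundary ∂Ω, and let (p,q) : [0,T) → ∂Ω × ∂Ω be a chord shortening flow relative to ∂Ω. Then (1/2) d/dt ‖Θ‖² = (ℓ/2)·⟨ξ(p), ξ(q)⟩·‖Δ^{1/2}Θ‖² + k(p)·⟨−η(p), ν(p)⟩·Θ(p)² + k(q)·⟨−η(q), ν(q)⟩·Θ(q)² + (1/ℓ)(‖Θ‖² − 1 − ⟨ξ(p), ξ(q)⟩)·‖Θ‖², where ℓ = ℓ(t) = |p(t) − q(t)| and ‖Δ^{1/2}Θ‖² = 2(Θ(p) − Θ(q))²/ℓ². -/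
open scoped RealInnerProductSpace ENNReal
open Set Filter

noncomputable section

/- ### auxiliary lemmas -/

lemma decomp_aux (u w : Euc 2) (hu : ⟪u, u⟫ = 1) (hw : ⟪w, u⟫ = 0) :
    w = ⟪w, Jrot u⟫ • Jrot u := by
  have h1 : ⟪u,u⟫ = u 0 * u 0 + u 1 * u 1 := by
    rw [PiLp.inner_apply]; simp [Fin.sum_univ_two, mul_comm]; ring
  have h2 : ⟪w,u⟫ = w 0 * u 0 + w 1 * u 1 := by
    simp [PiLp.inner_apply, Fin.sum_univ_two, mul_comm]
  have h3 : ⟪w, Jrot u⟫ = w 0 * (-(u 1)) + w 1 * u 0 := by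
    simp [PiLp.inner_apply, Fin.sum_univ_two, Jrot, mul_comm]
  rw [h1] at hu; rw [h2] at hw; rw [h3]
  ext i
  fin_cases i <;>
    simp only [PiLp.smul_apply, smul_eq_mul, Jrot, Matrix.cons_val_zero, Fin.isValue,
      Matrix.cons_val_one, Matrix.head_cons, Fin.zero_eta, Fin.mk_one, PiLp.toLp_apply]
  · linear_combination (-(w 0)) * hu + u 0 * hw
  · linear_combination (-(w 1)) * hu + u 1 * hw

lemma tangent_eq_span {S : Set (Euc 2)} {T : Euc 2 → Submodule ℝ (Euc 2)}
    (hsub : IsSubmanifold 2 1 S T) {x : Euc 2} (hx : x ∈ S) {u : Euc 2}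
    (hu : u ∈ T x) (hnu : ‖u‖ = 1) : T x = ℝ ∙ u := by
  obtain ⟨f, U, V, hUo, hVo, hxV, hcd, hinj, himg, hopen, hd⟩ := hsub x hx
  have hxim : x ∈ f '' U := by rw [himg]; exact ⟨hx, hxV⟩
  obtain ⟨y, hyU, hfy⟩ := hxim
  obtain ⟨hdinj, hdrange⟩ := hd y hyU
  have hfin : Module.finrank ℝ (T x) = 1 := by
    rw [← hfy, ← hdrange, LinearMap.finrank_range_of_inj hdinj]
    simp [finrank_euclideanSpace]
  have hune : u ≠ 0 := by intro h; rw [h] at hnu; simp at hnu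
  have hle : (ℝ ∙ u) ≤ T x := Submodule.span_le.2 (by simpa using hu)
  symm
  apply Submodule.eq_of_le_of_finrank_le hle
  rw [hfin, finrank_span_singleton hune]

lemma csf_unique_diff {Tm : ℝ≥0∞} {t : ℝ} (ht : t ∈ csfDomain Tm) :
    UniqueDiffWithinAt ℝ (csfDomain Tm) t := by
  set s := csfDomain Tm with hs
  have hconv : Convex ℝ s := by
    intro a ha b hb α β hα hβ hab
    constructor
    · have := ha.1; have := hb.1; positivity
    · calc ENNReal.ofReal (α • a + β • b) ≤ ENNReal.ofReal (max a b) := by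
            apply ENNReal.ofReal_le_ofReal
            simp only [smul_eq_mul]
            calc α * a + β * b ≤ α * max a b + β * max a b := by
                  gcongr; exact le_max_left a b; exact le_max_right a b
              _ = max a b := by rw [← add_mul, hab, one_mul]
      _ < Tm := by rcases max_cases a b with ⟨h,_⟩|⟨h,_⟩ <;> rw [h]; exacts [ha.2, hb.2]
  have hTm : (0:ℝ≥0∞) < Tm := lt_of_le_of_lt zero_le ht.2
  have hint : (interior s).Nonempty := by
    obtain ⟨r, hr0, hrT⟩ : ∃ r : ℝ, 0 < r ∧ ENNReal.ofReal r < Tm := by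
      rcases eq_or_ne Tm ⊤ with h|h
      · exact ⟨1, one_pos, by simp [h]⟩
      · have htr : 0 < Tm.toReal := ENNReal.toReal_pos hTm.ne' h
        refine ⟨Tm.toReal / 2, by positivity, ?_⟩
        rw [ENNReal.ofReal_lt_iff_lt_toReal (by positivity) h]
        linarith
    refine ⟨r/2, mem_interior.2 ⟨Ioo 0 r, ?_, isOpen_Ioo, ⟨by linarith, by linarith⟩⟩⟩
    intro z hz
    exact ⟨hz.1.le, lt_of_le_of_lt (ENNReal.ofReal_le_ofReal hz.2.le) hrT⟩
  exact uniqueDiffWithinAt_convex hconv hint (subset_closure ht)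

lemma thetaP_eq (ξ : Euc 2 → Euc 2) (x y : Euc 2) :
    thetaP ξ x y = ⟪x - y, ξ x⟫ / ‖x - y‖ := by
  rw [thetaP, real_inner_smul_left, div_eq_inv_mul]

lemma thetaQ_eq_s14 (ξ : Euc 2 → Euc 2) (x y : Euc 2) :
    thetaQ ξ x y = ⟪x - y, ξ y⟫ / ‖x - y‖ := by
  rw [thetaQ, real_inner_smul_left, ← neg_sub x y, norm_neg, inner_neg_left, div_eq_inv_mul]
  ring


set_option maxHeartbeats 2000000 in
/-- **Evolution of `‖Θ‖² = Θ(p)² + Θ(q)²`** under the chord shortening flow relative to the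
smooth boundary of a compact connected planar region:
`(1/2) d/dt ‖Θ‖² = (ℓ/2)⟨ξ(p),ξ(q)⟩‖Δ^{1/2}Θ‖² + k(p)⟨-η(p),ν(p)⟩Θ(p)²
  + k(q)⟨-η(q),ν(q)⟩Θ(q)² + (1/ℓ)(‖Θ‖² - 1 - ⟨ξ(p),ξ(q)⟩)‖Θ‖²`,
where `‖Δ^{1/2}Θ‖² = 2(Θ(p) - Θ(q))²/ℓ²`. -/
theorem chord_statement_14
    (Ω : Set (Euc 2)) (hcpt : IsCompact Ω) (hconn : IsConnected Ω)
    (hreg : Ω = closure (interior Ω))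
    (T : Euc 2 → Submodule ℝ (Euc 2)) (hsub : IsSubmanifold 2 1 (frontier Ω) T)
    (ξ : Euc 2 → Euc 2)
    (hξ : ∀ x ∈ frontier Ω, ξ x ∈ T x ∧ ‖ξ x‖ = 1 ∧
      ∃ ε : ℝ, 0 < ε ∧ ∀ s : ℝ, 0 < s → s < ε → x + s • Jrot (ξ x) ∈ interior Ω)
    (κ : Euc 2 → ℝ)
    (hκ : ∀ x ∈ frontier Ω, ∃ dξ : Euc 2 →L[ℝ] Euc 2,
      HasFDerivWithinAt ξ dξ (frontier Ω) x ∧ κ x = ⟪dξ (ξ x), Jrot (ξ x)⟫)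
    (Tm : ℝ≥0∞) (p q : ℝ → Euc 2)
    (hflow : IsCSFOn (frontier Ω) T (csfDomain Tm) p q) :
    ∀ t ∈ csfDomain Tm,
      HasDerivWithinAt (fun s => thetaP ξ (p s) (q s) ^ 2 + thetaQ ξ (p s) (q s) ^ 2)
        (2 * ((‖p t - q t‖ / 2) * ⟪ξ (p t), ξ (q t)⟫ *
              (2 * (thetaP ξ (p t) (q t) - thetaQ ξ (p t) (q t)) ^ 2 / ‖p t - q t‖ ^ 2)
            + κ (p t) * ⟪-(‖p t - q t‖⁻¹ • (p t - q t)), Jrot (ξ (p t))⟫ *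
                thetaP ξ (p t) (q t) ^ 2
            + κ (q t) * ⟪-(‖q t - p t‖⁻¹ • (q t - p t)), Jrot (ξ (q t))⟫ *
                thetaQ ξ (p t) (q t) ^ 2
            + ‖p t - q t‖⁻¹ *
                ((thetaP ξ (p t) (q t) ^ 2 + thetaQ ξ (p t) (q t) ^ 2)
                  - 1 - ⟪ξ (p t), ξ (q t)⟫) *
                (thetaP ξ (p t) (q t) ^ 2 + thetaQ ξ (p t) (q t) ^ 2)))
        (csfDomain Tm) t := by
  intro t ht
  set dom := csfDomain Tm with hdom
  obtain ⟨hpS, hqS, hpq, hp0, hq0⟩ := hflow t ht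
  obtain ⟨hξTp, hξnp, -⟩ := hξ (p t) hpS
  obtain ⟨hξTq, hξnq, -⟩ := hξ (q t) hqS
  have hipp : ⟪ξ (p t), ξ (p t)⟫ = 1 := by
    rw [real_inner_self_eq_norm_mul_norm, hξnp]; norm_num
  have hiqq : ⟪ξ (q t), ξ (q t)⟫ = 1 := by
    rw [real_inner_self_eq_norm_mul_norm, hξnq]; norm_num
  have hud : UniqueDiffWithinAt ℝ dom t := csf_unique_diff ht
  have hmp : MapsTo p dom (frontier Ω) := fun s hs => (hflow s hs).1
  have hmq : MapsTo q dom (frontier Ω) := fun s hs => (hflow s hs).2.1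
  set Θp := thetaP ξ (p t) (q t) with hΘpdef
  set Θq := thetaQ ξ (p t) (q t) with hΘqdef
  -- p and q derivative
  have hconp : conormalT T (p t) (q t) = Θp • ξ (p t) := by
    rw [conormalT, projSM, tangent_eq_span hsub hpS hξTp hξnp,
      ← Submodule.starProjection_apply, Submodule.starProjection_unit_singleton ℝ hξnp, hΘpdef, thetaP, real_inner_comm]
  have hconq : conormalT T (q t) (p t) = (-Θq) • ξ (q t) := by
    rw [conormalT, projSM, tangent_eq_span hsub hqS hξTq hξnq,
      ← Submodule.starProjection_apply, Submodule.starProjection_unit_singleton ℝ hξnq, hΘqdef, thetaQ, real_inner_comm]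
    rw [neg_neg]
  have hp : HasDerivWithinAt p ((-Θp) • ξ (p t)) dom t := by
    rw [neg_smul]; rw [hconp] at hp0; exact hp0
  have hq : HasDerivWithinAt q (Θq • ξ (q t)) dom t := by
    have := hq0; rw [hconq, neg_smul, neg_neg] at this; exact this
  -- derivative of ξ ∘ p
  obtain ⟨dξp, hdξp, hκp⟩ := hκ (p t) hpS
  obtain ⟨dξq, hdξq, hκq⟩ := hκ (q t) hqS
  have hξp : HasDerivWithinAt (fun s => ξ (p s)) ((-Θp) • dξp (ξ (p t))) dom t := by
    have := hdξp.comp_hasDerivWithinAt t hp hmp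
    rw [map_smul] at this
    exact this
  have hξq : HasDerivWithinAt (fun s => ξ (q s)) (Θq • dξq (ξ (q t))) dom t := by
    have := hdξq.comp_hasDerivWithinAt t hq hmq
    rw [map_smul] at this
    exact this
  -- orthogonality of the derivative of ξ∘p to ξ∘p
  have horthp : ⟪(-Θp) • dξp (ξ (p t)), ξ (p t)⟫ = 0 := by
    have hgp := hξp.inner ℝ hξp
    have hone : ∀ s ∈ dom, ⟪ξ (p s), ξ (p s)⟫ = (1:ℝ) := fun s hs => by
      rw [real_inner_self_eq_norm_mul_norm, (hξ (p s) (hmp hs)).2.1]; norm_num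
    have hgp0 : HasDerivWithinAt (fun s => ⟪ξ (p s), ξ (p s)⟫) 0 dom t :=
      (hasDerivWithinAt_const t dom 1).congr hone (hone t ht)
    have h0 := hgp.derivWithin hud
    rw [hgp0.derivWithin hud] at h0
    rw [real_inner_comm] at h0
    linarith [h0]
  have horthq : ⟪Θq • dξq (ξ (q t)), ξ (q t)⟫ = 0 := by
    have hgq := hξq.inner ℝ hξq
    have hone : ∀ s ∈ dom, ⟪ξ (q s), ξ (q s)⟫ = (1:ℝ) := fun s hs => by
      rw [real_inner_self_eq_norm_mul_norm, (hξ (q s) (hmq hs)).2.1]; norm_num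
    have hgq0 : HasDerivWithinAt (fun s => ⟪ξ (q s), ξ (q s)⟫) 0 dom t :=
      (hasDerivWithinAt_const t dom 1).congr hone (hone t ht)
    have h0 := hgq.derivWithin hud
    rw [hgq0.derivWithin hud] at h0
    rw [real_inner_comm] at h0
    linarith [h0]
  -- the derivative of ξ∘p as a multiple of Jrot
  have hDpval : (-Θp) • dξp (ξ (p t)) = ((-Θp) * κ (p t)) • Jrot (ξ (p t)) := by
    rw [decomp_aux (ξ (p t)) _ hipp horthp]
    congr 1
    rw [inner_smul_left, hκp]
    simp
  have hDqval : Θq • dξq (ξ (q t)) = (Θq * κ (q t)) • Jrot (ξ (q t)) := by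
    rw [decomp_aux (ξ (q t)) _ hiqq horthq]
    congr 1
    rw [inner_smul_left, hκq]
    simp
  rw [hDpval] at hξp
  rw [hDqval] at hξq
  -- derivative of the chord vector
  have hvne : p t - q t ≠ 0 := sub_ne_zero.2 hpq
  have hlne : ‖p t - q t‖ ≠ 0 := norm_ne_zero_iff.2 hvne
  set V' : Euc 2 := (-Θp) • ξ (p t) - Θq • ξ (q t) with hV'
  have hv : HasDerivWithinAt (fun s => p s - q s) V' dom t := hp.sub hq
  -- derivative of the length
  have hVVne : ⟪p t - q t, p t - q t⟫ ≠ 0 := by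
    rw [real_inner_self_eq_norm_mul_norm]
    exact mul_ne_zero hlne hlne
  have hℓ : HasDerivWithinAt (fun s => ‖p s - q s‖) (⟪p t - q t, V'⟫ / ‖p t - q t‖) dom t := by
    have hVV := hv.inner ℝ hv
    have hsq := (hVV.sqrt hVVne)
    have heq : ∀ s, Real.sqrt ⟪p s - q s, p s - q s⟫ = ‖p s - q s‖ := fun s => by
      rw [real_inner_self_eq_norm_mul_norm, Real.sqrt_mul_self (norm_nonneg _)]
    have hsq' := hsq.congr (fun s _ => (heq s).symm) (heq t).symm
    refine hsq'.congr_deriv ?_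
    rw [real_inner_comm (V') (p t - q t), real_inner_self_eq_norm_mul_norm,
      Real.sqrt_mul_self (norm_nonneg _)]
    field_simp
    ring
  -- derivatives of the numerators
  have hA : HasDerivWithinAt (fun s => ⟪p s - q s, ξ (p s)⟫)
      (⟪p t - q t, ((-Θp) * κ (p t)) • Jrot (ξ (p t))⟫ + ⟪V', ξ (p t)⟫) dom t :=
    hv.inner ℝ hξp
  have hB : HasDerivWithinAt (fun s => ⟪p s - q s, ξ (q s)⟫)
      (⟪p t - q t, (Θq * κ (q t)) • Jrot (ξ (q t))⟫ + ⟪V', ξ (q t)⟫) dom t :=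
    hv.inner ℝ hξq
  -- derivatives of the angles
  have hΘpd : HasDerivWithinAt (fun s => thetaP ξ (p s) (q s))
      (((⟪p t - q t, ((-Θp) * κ (p t)) • Jrot (ξ (p t))⟫ + ⟪V', ξ (p t)⟫) * ‖p t - q t‖
        - ⟪p t - q t, ξ (p t)⟫ * (⟪p t - q t, V'⟫ / ‖p t - q t‖)) / ‖p t - q t‖ ^ 2) dom t := by
    have := hA.div hℓ hlne
    exact this.congr (fun s _ => thetaP_eq ξ (p s) (q s)) (thetaP_eq ξ (p t) (q t))
  have hΘqd : HasDerivWithinAt (fun s => thetaQ ξ (p s) (q s))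
      (((⟪p t - q t, (Θq * κ (q t)) • Jrot (ξ (q t))⟫ + ⟪V', ξ (q t)⟫) * ‖p t - q t‖
        - ⟪p t - q t, ξ (q t)⟫ * (⟪p t - q t, V'⟫ / ‖p t - q t‖)) / ‖p t - q t‖ ^ 2) dom t := by
    have := hB.div hℓ hlne
    exact this.congr (fun s _ => thetaQ_eq_s14 ξ (p s) (q s)) (thetaQ_eq_s14 ξ (p t) (q t))
  -- combine
  have hF := (hΘpd.pow 2).add (hΘqd.pow 2)
  refine hF.congr_deriv ?_
  -- now a scalar identity
  have hqp : q t - p t = -(p t - q t) := (neg_sub _ _).symm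
  have e1 : ⟪p t - q t, ((-Θp) * κ (p t)) • Jrot (ξ (p t))⟫
      = (-Θp * κ (p t)) * ⟪p t - q t, Jrot (ξ (p t))⟫ := real_inner_smul_right _ _ _
  have e2 : ⟪p t - q t, (Θq * κ (q t)) • Jrot (ξ (q t))⟫
      = (Θq * κ (q t)) * ⟪p t - q t, Jrot (ξ (q t))⟫ := real_inner_smul_right _ _ _
  have e3 : ⟪V', ξ (p t)⟫ = -Θp - Θq * ⟪ξ (p t), ξ (q t)⟫ := by
    rw [hV', inner_sub_left, real_inner_smul_left, real_inner_smul_left, hipp,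
      real_inner_comm (ξ (q t))]
    ring
  have e4 : ⟪V', ξ (q t)⟫ = -Θp * ⟪ξ (p t), ξ (q t)⟫ - Θq := by
    rw [hV', inner_sub_left, real_inner_smul_left, real_inner_smul_left, hiqq]
    ring
  have e5 : ⟪p t - q t, V'⟫
      = -Θp * ⟪p t - q t, ξ (p t)⟫ - Θq * ⟪p t - q t, ξ (q t)⟫ := by
    rw [hV', inner_sub_right, real_inner_smul_right, real_inner_smul_right]
  have e6 : ⟪-(‖p t - q t‖⁻¹ • (p t - q t)), Jrot (ξ (p t))⟫
      = -(‖p t - q t‖⁻¹ * ⟪p t - q t, Jrot (ξ (p t))⟫) := by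
    rw [inner_neg_left, real_inner_smul_left]
  have e7 : ⟪-(‖q t - p t‖⁻¹ • (q t - p t)), Jrot (ξ (q t))⟫
      = ‖p t - q t‖⁻¹ * ⟪p t - q t, Jrot (ξ (q t))⟫ := by
    rw [hqp, norm_neg, smul_neg, neg_neg, real_inner_smul_left]
  have hΘpval : Θp = ⟪p t - q t, ξ (p t)⟫ / ‖p t - q t‖ := thetaP_eq ξ (p t) (q t)
  have hΘqval : Θq = ⟪p t - q t, ξ (q t)⟫ / ‖p t - q t‖ := thetaQ_eq_s14 ξ (p t) (q t)
  rw [← hΘpdef, ← hΘqdef, e1, e2, e3, e4, e5, e6, e7, hΘpval, hΘqval]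
  set a := ⟪p t - q t, ξ (p t)⟫ with ha
  set b := ⟪p t - q t, ξ (q t)⟫ with hb
  set c := ⟪ξ (p t), ξ (q t)⟫ with hc
  set jp := ⟪p t - q t, Jrot (ξ (p t))⟫ with hjp
  set jq := ⟪p t - q t, Jrot (ξ (q t))⟫ with hjq
  set l := ‖p t - q t‖ with hl
  clear_value a b c jp jq l
  have hlne' : l ≠ 0 := hlne
  field_simp
  have hli : l * l⁻¹ = 1 := mul_inv_cancel₀ hlne'
  linear_combination (4 * a ^ 2 * b ^ 2 + 2 * a ^ 4 + 2 * b ^ 4 - l ^ 2 * (4 * a * b * c + 2 * a ^ 2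
    + 2 * a ^ 2 * κ (p t) * jp + 2 * b ^ 2 - 2 * b ^ 2 * κ (q t) * jq)) * hli


end
end
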